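/- (Mirror descent.) Let Θ ⊆ ℝ^n be compact convex, f₁,…,f_T : Θ → ℝ convex, and ‖·‖ a norm on ℝ^n with dual norm ‖·‖_*. Suppose the distance-generating function Ψ : Θ → ℝ₊ is nonnegative, differentiable and 1-strongly convex w.r.t. ‖·‖, with B_Ψ ≥ max_{θ∈Θ} Ψ(θ). Starting from θ^(1) = argmin_{θ∈Θ} Ψ(θ), perform T iterations: θ̃^(t+1) satisfies ∇Ψ(θ̃^(t+1)) = ∇Ψ(θ^(t)) − η ǧ_t(θ^(t)), and θ^(t+1) = argmin_{θ∈Θ} B_Ψ(θ | θ̃^(t+1)), where ǧ_t(θ^(t)) ∈ ∂f_t(θ^(t)) is a subgradient, ‖ǧ_t(θ^(t))‖_* ≤ B_ǧ for all t, η := √(B_Ψ/(T B_ǧ²)), and B_Ψ(θ | θ') := Ψ(θ) − Ψ(θ') − ⟨∇Ψ(θ'), θ − θ'⟩ is the Bregman divergence of Ψ. Then for every θ* ∈ Θ: (1/T) Σ_{t=1}^T f_t(θ^(t)) − (1/T) Σ_{t=1}^T f_t(θ*) ≤ 2 B_ǧ √(B_Ψ/T). -/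

import Mathlib

/-- The dual norm of a (semi)norm `N` on `Fin n → ℝ`:
`‖v‖_* = sup {⟨v, x⟩ : N x ≤ 1}`. -/
noncomputable def dualNorm {n : ℕ} (N : (Fin n → ℝ) → ℝ) (v : Fin n → ℝ) : ℝ :=
  sSup ((fun x => ∑ i, v i * x i) '' {x | N x ≤ 1})

/-- The Bregman divergence associated with `Ψ` (whose gradient is `gradΨ`). -/
noncomputable def bregman {n : ℕ} (Ψ : (Fin n → ℝ) → ℝ)
    (gradΨ : (Fin n → ℝ) → (Fin n → ℝ)) (a b : Fin n → ℝ) : ℝ :=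
  Ψ a - Ψ b - ∑ i, gradΨ b i * (a i - b i)

section MirrorAux
variable {n : ℕ}

lemma Naux_nonneg (N : (Fin n → ℝ) → ℝ)
    (hNtri : ∀ x y, N (x + y) ≤ N x + N y)
    (hNsmul : ∀ (c : ℝ) x, N (c • x) = |c| * N x) :
    N 0 = 0 ∧ ∀ x, 0 ≤ N x := by
  have h0 : N 0 = 0 := by
    have := hNsmul 0 0
    simpa using this
  refine ⟨h0, fun x => ?_⟩
  have h1 := hNtri x (-x)
  have h2 : N (-x) = N x := by
    have := hNsmul (-1) x
    simpa using this
  simp [h0] at h1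
  nlinarith

lemma Naux_sum_single (N : (Fin n → ℝ) → ℝ)
    (hNtri : ∀ x y, N (x + y) ≤ N x + N y)
    (hNsmul : ∀ (c : ℝ) x, N (c • x) = |c| * N x)
    (v : Fin n → ℝ) :
    N v ≤ ∑ i, |v i| * N (Pi.single i 1) := by
  have h0 := (Naux_nonneg N hNtri hNsmul).1
  have htri : ∀ (s : Finset (Fin n)) (u : Fin n → (Fin n → ℝ)),
      N (∑ i ∈ s, u i) ≤ ∑ i ∈ s, N (u i) := by
    intro s u
    induction s using Finset.induction with
    | empty => simp [h0]
    | @insert a s hx ih =>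
      rw [Finset.sum_insert hx, Finset.sum_insert hx]
      exact (hNtri _ _).trans (by linarith)
  have hv : v = ∑ i, v i • (Pi.single i (1:ℝ) : Fin n → ℝ) := by
    funext j
    simp [Finset.sum_apply, Pi.single_apply]
  calc N v = N (∑ i, v i • (Pi.single i (1:ℝ) : Fin n → ℝ)) := by rw [← hv]
    _ ≤ ∑ i, N (v i • (Pi.single i (1:ℝ) : Fin n → ℝ)) := htri _ _
    _ = ∑ i, |v i| * N (Pi.single i 1) := by
        exact Finset.sum_congr rfl fun i _ => hNsmul _ _

lemma Naux_cont (N : (Fin n → ℝ) → ℝ)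
    (hNtri : ∀ x y, N (x + y) ≤ N x + N y)
    (hNsmul : ∀ (c : ℝ) x, N (c • x) = |c| * N x) :
    Continuous N := by
  obtain ⟨h0, hnn⟩ := Naux_nonneg N hNtri hNsmul
  set K : ℝ := ∑ i, N (Pi.single i (1:ℝ)) with hK
  have hK0 : 0 ≤ K := Finset.sum_nonneg fun i _ => hnn _
  have hlip : ∀ a b, |N a - N b| ≤ K * ‖a - b‖ := by
    intro a b
    have key : ∀ x y : Fin n → ℝ, N x - N y ≤ K * ‖x - y‖ := by
      intro x y
      have h1 : N x ≤ N y + N (x - y) := by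
        have := hNtri y (x - y); simpa using this
      have h2 : N (x - y) ≤ ∑ i, |(x - y) i| * N (Pi.single i 1) :=
        Naux_sum_single N hNtri hNsmul _
      have h3 : ∑ i, |(x - y) i| * N (Pi.single i 1) ≤ K * ‖x - y‖ := by
        have : ∀ i ∈ Finset.univ, |(x - y) i| * N (Pi.single i (1:ℝ))
            ≤ ‖x - y‖ * N (Pi.single i (1:ℝ)) := by
          intro i _
          apply mul_le_mul_of_nonneg_right _ (hnn _)
          simpa [Real.norm_eq_abs] using norm_le_pi_norm (x - y) i
        calc ∑ i, |(x - y) i| * N (Pi.single i 1)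
            ≤ ∑ i, ‖x - y‖ * N (Pi.single i (1:ℝ)) := Finset.sum_le_sum this
          _ = K * ‖x - y‖ := by rw [← Finset.mul_sum, mul_comm]
      linarith
    rw [abs_sub_le_iff]
    constructor
    · exact key a b
    · have := key b a
      rwa [show b - a = -(a-b) by ring, norm_neg] at this
  rw [Metric.continuous_iff]
  intro a ε hε
  rcases eq_or_lt_of_le hK0 with hK' | hK'
  · exact ⟨1, one_pos, fun b _ => by
      have := hlip b a
      rw [← hK'] at this
      simp at this
      simpa [Real.dist_eq, abs_sub_lt_iff] using by constructor <;> linarith⟩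
  · refine ⟨ε / K, div_pos hε hK', fun b hb => ?_⟩
    have := hlip b a
    rw [Real.dist_eq]
    calc |N b - N a| ≤ K * ‖b - a‖ := this
      _ < K * (ε / K) := by
          apply mul_lt_mul_of_pos_left _ hK'
          rwa [dist_eq_norm] at hb
      _ = ε := by field_simp

lemma Naux_lb (N : (Fin n → ℝ) → ℝ)
    (hNtri : ∀ x y, N (x + y) ≤ N x + N y)
    (hNsmul : ∀ (c : ℝ) x, N (c • x) = |c| * N x)
    (hNdef : ∀ x, N x = 0 → x = 0)
    (hcont : Continuous N) :
    ∃ c : ℝ, 0 < c ∧ ∀ x, c * ‖x‖ ≤ N x := by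
  obtain ⟨h0, hnn⟩ := Naux_nonneg N hNtri hNsmul
  rcases Nat.eq_zero_or_pos n with hn | hn
  · refine ⟨1, one_pos, fun x => ?_⟩
    have : x = 0 := by funext i; exact absurd i.2 (by omega)
    simp [this, h0]
  · haveI : Nonempty (Fin n) := ⟨⟨0, hn⟩⟩
    have hne : (Metric.sphere (0 : Fin n → ℝ) 1).Nonempty :=
      NormedSpace.sphere_nonempty.2 zero_le_one
    obtain ⟨x₀, hx₀s, hmin⟩ :=
      (isCompact_sphere (0 : Fin n → ℝ) 1).exists_isMinOn hne hcont.continuousOn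
    have hx₀n : ‖x₀‖ = 1 := by simpa using hx₀s
    have hx₀0 : x₀ ≠ 0 := by
      intro h; rw [h] at hx₀n; simp at hx₀n
    have hc : 0 < N x₀ := by
      rcases lt_or_eq_of_le (hnn x₀) with h | h
      · exact h
      · exact absurd (hNdef x₀ h.symm) hx₀0
    refine ⟨N x₀, hc, fun x => ?_⟩
    rcases eq_or_ne x 0 with hx | hx
    · simp [hx, h0]
    · have hxn : ‖x‖ ≠ 0 := norm_ne_zero_iff.2 hx
      set u := ‖x‖⁻¹ • x with hu
      have hun : ‖u‖ = 1 := by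
        rw [hu, norm_smul, norm_inv, norm_norm, inv_mul_cancel₀ hxn]
      have hus : u ∈ Metric.sphere (0 : Fin n → ℝ) 1 := by simpa using hun
      have h1 : N x₀ ≤ N u := hmin hus
      have hxu : x = ‖x‖ • u := by rw [hu, smul_smul, mul_inv_cancel₀ hxn, one_smul]
      have h2 : N x = ‖x‖ * N u := by
        calc N x = N (‖x‖ • u) := by rw [← hxu]
          _ = |‖x‖| * N u := hNsmul _ _
          _ = ‖x‖ * N u := by rw [abs_of_nonneg (norm_nonneg x)]
      rw [h2]
      calc N x₀ * ‖x‖ = ‖x‖ * N x₀ := mul_comm _ _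
        _ ≤ ‖x‖ * N u := mul_le_mul_of_nonneg_left h1 (norm_nonneg x)

lemma dual_facts (N : (Fin n → ℝ) → ℝ)
    (h0 : N 0 = 0) (hnn : ∀ x, 0 ≤ N x)
    (hNsmul : ∀ (c : ℝ) x, N (c • x) = |c| * N x)
    (hNdef : ∀ x, N x = 0 → x = 0)
    (c : ℝ) (hc : 0 < c) (hlb : ∀ x, c * ‖x‖ ≤ N x) (g : Fin n → ℝ) :
    0 ≤ dualNorm N g ∧ ∀ v, (∑ i, g i * v i) ≤ dualNorm N g * N v := by
  set S := ((fun x => ∑ i, g i * x i) '' {x | N x ≤ 1}) with hS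
  have hbdd : BddAbove S := by
    refine ⟨(∑ i, |g i|) * c⁻¹, fun y hy => ?_⟩
    obtain ⟨x, hx, rfl⟩ := hy
    have hxle : ‖x‖ ≤ c⁻¹ := by
      have h1 := hlb x
      have hx1 : N x ≤ 1 := hx
      nlinarith [mul_inv_cancel₀ (ne_of_gt hc)]
    calc ∑ i, g i * x i ≤ ∑ i, |g i| * c⁻¹ := by
          refine Finset.sum_le_sum fun i _ => ?_
          have h1 : g i * x i ≤ |g i| * |x i| := by
            calc g i * x i ≤ |g i * x i| := le_abs_self _
              _ = |g i| * |x i| := abs_mul _ _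
          have h2 : |x i| ≤ c⁻¹ := by
            have := norm_le_pi_norm x i
            simp [Real.norm_eq_abs] at this
            linarith
          nlinarith [abs_nonneg (g i), abs_nonneg (x i)]
      _ = (∑ i, |g i|) * c⁻¹ := by rw [Finset.sum_mul]
  have h0S : (0:ℝ) ∈ S := ⟨0, by simp [h0], by simp⟩
  have hd0 : 0 ≤ dualNorm N g := le_csSup hbdd h0S
  refine ⟨hd0, fun v => ?_⟩
  rcases eq_or_lt_of_le (hnn v) with hv | hv
  · have : v = 0 := hNdef v hv.symm
    simp [this, h0]
  · have hvn : N v ≠ 0 := ne_of_gt hv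
    set x := (N v)⁻¹ • v with hx
    have hx1 : N x ≤ 1 := by
      rw [hx, hNsmul, abs_of_nonneg (inv_nonneg.2 (hnn v)), inv_mul_cancel₀ hvn]
    have hmem : (∑ i, g i * x i) ∈ S := ⟨x, hx1, rfl⟩
    have hle : (∑ i, g i * x i) ≤ dualNorm N g := le_csSup hbdd hmem
    have heq : ∑ i, g i * x i = (N v)⁻¹ * ∑ i, g i * v i := by
      rw [Finset.mul_sum]
      refine Finset.sum_congr rfl fun i _ => ?_
      rw [hx]; simp [Pi.smul_apply]; ring
    rw [heq] at hle
    calc ∑ i, g i * v i = N v * ((N v)⁻¹ * ∑ i, g i * v i) := by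
          field_simp
      _ ≤ N v * dualNorm N g := mul_le_mul_of_nonneg_left hle (hnn v)
      _ = dualNorm N g * N v := mul_comm _ _

lemma sum_proj_apply (c : Fin n → ℝ) (y : Fin n → ℝ) :
    (∑ i, c i • (ContinuousLinearMap.proj i : (Fin n → ℝ) →L[ℝ] ℝ)) y
      = ∑ i, c i * y i := by
  simp

/-- three point identity -/
lemma bregman_three (Ψ : (Fin n → ℝ) → ℝ) (gradΨ : (Fin n → ℝ) → (Fin n → ℝ))
    (c x y : Fin n → ℝ) :
    bregman Ψ gradΨ c x - bregman Ψ gradΨ c y + bregman Ψ gradΨ x y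
      = ∑ i, (gradΨ x i - gradΨ y i) * (x i - c i) := by
  unfold bregman
  have key : ∑ i, gradΨ y i * (c i - y i)
      = ∑ i, (gradΨ x i * (c i - x i) + gradΨ y i * (x i - y i)
          + (gradΨ x i - gradΨ y i) * (x i - c i)) :=
    Finset.sum_congr rfl fun i _ => by ring
  rw [Finset.sum_add_distrib, Finset.sum_add_distrib] at key
  linarith

/-- first-order optimality on a convex set -/
lemma first_order {Θ : Set (Fin n → ℝ)} (hΘconv : Convex ℝ Θ)
    (F : (Fin n → ℝ) → ℝ) (F' : (Fin n → ℝ) →L[ℝ] ℝ) {p θ' : Fin n → ℝ}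
    (hp : p ∈ Θ) (hθ' : θ' ∈ Θ) (hmin : ∀ y ∈ Θ, F p ≤ F y)
    (hd : HasFDerivAt F F' p) : 0 ≤ F' (θ' - p) := by
  have hminon : IsMinOn F Θ p := fun y hy => hmin y hy
  exact hminon.localize.hasFDerivWithinAt_nonneg hd.hasFDerivWithinAt
    (sub_mem_posTangentConeAt_of_segment_subset (hΘconv.segment_subset hp hθ'))

/-- first-order optimality for the Bregman projection -/
lemma breg_first_order {Θ : Set (Fin n → ℝ)} (hΘconv : Convex ℝ Θ)
    (Ψ : (Fin n → ℝ) → ℝ) (gradΨ : (Fin n → ℝ) → (Fin n → ℝ))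
    (hΨdiff : ∀ x, HasFDerivAt Ψ
      (∑ i, gradΨ x i • (ContinuousLinearMap.proj i : (Fin n → ℝ) →L[ℝ] ℝ)) x)
    {p θ' b : Fin n → ℝ} (hp : p ∈ Θ) (hθ' : θ' ∈ Θ)
    (hmin : ∀ y ∈ Θ, bregman Ψ gradΨ p b ≤ bregman Ψ gradΨ y b) :
    0 ≤ ∑ i, (gradΨ p i - gradΨ b i) * (θ' i - p i) := by
  set L : (Fin n → ℝ) →L[ℝ] ℝ :=
    ∑ i, gradΨ b i • (ContinuousLinearMap.proj i : (Fin n → ℝ) →L[ℝ] ℝ) with hL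
  set D : (Fin n → ℝ) →L[ℝ] ℝ :=
    (∑ i, gradΨ p i • (ContinuousLinearMap.proj i : (Fin n → ℝ) →L[ℝ] ℝ)) - L with hD
  have hfe : (fun y => bregman Ψ gradΨ y b)
      = fun y => (Ψ y - Ψ b) - (L y - L b) := by
    funext y
    unfold bregman
    rw [hL, sum_proj_apply, sum_proj_apply]
    rw [show ∑ i, gradΨ b i * (y i - b i)
        = ∑ i, gradΨ b i * y i - ∑ i, gradΨ b i * b i by
      rw [← Finset.sum_sub_distrib]; exact Finset.sum_congr rfl fun i _ => by ring]
  have hder : HasFDerivAt (fun y => bregman Ψ gradΨ y b) D p := by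
    rw [hfe, hD]
    exact ((hΨdiff p).sub_const (Ψ b)).sub (L.hasFDerivAt.sub_const (L b))
  have h := first_order hΘconv _ D hp hθ' hmin hder
  have hDval : D (θ' - p) = ∑ i, (gradΨ p i - gradΨ b i) * (θ' i - p i) := by
    rw [hD]
    rw [ContinuousLinearMap.sub_apply, hL, sum_proj_apply, sum_proj_apply]
    rw [← Finset.sum_sub_distrib]
    refine Finset.sum_congr rfl fun i _ => ?_
    simp
    ring
  rwa [hDval] at h


lemma mirror_core {Θ : Set (Fin n → ℝ)} (hΘconv : Convex ℝ Θ)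
    (N : (Fin n → ℝ) → ℝ) (hNsmul : ∀ (c : ℝ) x, N (c • x) = |c| * N x)
    (hNnn : ∀ x, 0 ≤ N x)
    (Ψ : (Fin n → ℝ) → ℝ) (gradΨ : (Fin n → ℝ) → (Fin n → ℝ))
    (hΨdiff : ∀ x, HasFDerivAt Ψ
      (∑ i, gradΨ x i • (ContinuousLinearMap.proj i : (Fin n → ℝ) →L[ℝ] ℝ)) x)
    (hBlow : ∀ a b, (1/2) * (N (a - b))^2 ≤ bregman Ψ gradΨ a b)
    (f : ℕ → (Fin n → ℝ) → ℝ) (T : ℕ) (η Bg BΨ : ℝ)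
    (hη0 : 0 ≤ η)
    (θs θtil gs : ℕ → Fin n → ℝ) (θ' : Fin n → ℝ) (hθ' : θ' ∈ Θ)
    (hinit : θs 0 ∈ Θ ∧ ∀ y ∈ Θ, Ψ (θs 0) ≤ Ψ y)
    (hsubgrad : ∀ t < T, ∀ y ∈ Θ, f t (θs t) + ∑ i, gs t i * (y i - θs t i) ≤ f t y)
    (hmirror : ∀ t < T, gradΨ (θtil (t + 1)) = gradΨ (θs t) - η • gs t)
    (hproj : ∀ t < T, θs (t + 1) ∈ Θ ∧
      ∀ y ∈ Θ, bregman Ψ gradΨ (θs (t + 1)) (θtil (t + 1))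
        ≤ bregman Ψ gradΨ y (θtil (t + 1)))
    (hCSB : ∀ t < T, ∀ v, (∑ i, gs t i * v i) ≤ Bg * N v)
    (hBΨ' : Ψ θ' ≤ BΨ) (hΨ0 : 0 ≤ Ψ (θs 0)) :
    η * ∑ t ∈ Finset.range T, (f t (θs t) - f t θ')
      ≤ BΨ + T * (η^2 * Bg^2 / 2) := by
  have hBpos : ∀ a b, 0 ≤ bregman Ψ gradΨ a b := fun a b =>
    le_trans (by positivity) (hBlow a b)
  have hstep : ∀ t, t < T → η * (f t (θs t) - f t θ')
      ≤ bregman Ψ gradΨ θ' (θs t) - bregman Ψ gradΨ θ' (θs (t+1)) + η^2 * Bg^2 / 2 := by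
    intro t ht
    set x := θs t with hxdef
    set y := θtil (t+1) with hydef
    set p := θs (t+1) with hpdef
    have h1 : f t x - f t θ' ≤ ∑ i, gs t i * (x i - θ' i) := by
      have hsg := hsubgrad t ht θ' hθ'
      have hneg : ∑ i, gs t i * (θ' i - x i) = - ∑ i, gs t i * (x i - θ' i) := by
        rw [← Finset.sum_neg_distrib]
        exact Finset.sum_congr rfl fun i _ => by ring
      rw [hneg] at hsg
      linarith
    have hgrad : ∀ i, gradΨ x i - gradΨ y i = η * gs t i := by
      intro i
      have := congrFun (hmirror t ht) i
      simp [Pi.sub_apply, Pi.smul_apply, smul_eq_mul] at this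
      rw [this]; ring
    have h2 : bregman Ψ gradΨ θ' x - bregman Ψ gradΨ θ' y + bregman Ψ gradΨ x y
        = η * ∑ i, gs t i * (x i - θ' i) := by
      rw [bregman_three, Finset.mul_sum]
      exact Finset.sum_congr rfl fun i _ => by rw [hgrad i]; ring
    have h3 : bregman Ψ gradΨ x y ≤ η^2 * Bg^2 / 2 := by
      have hsym := bregman_three Ψ gradΨ y x y
      have hyy : bregman Ψ gradΨ y y = 0 := by unfold bregman; simp
      have heq : ∑ i, (gradΨ x i - gradΨ y i) * (x i - y i)
          = η * ∑ i, gs t i * (x i - y i) := by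
        rw [Finset.mul_sum]
        exact Finset.sum_congr rfl fun i _ => by rw [hgrad i]; ring
      have hcs : ∑ i, gs t i * (x i - y i) ≤ Bg * N (x - y) := by
        have h := hCSB t ht (x - y)
        calc ∑ i, gs t i * (x i - y i) = ∑ i, gs t i * (x - y) i :=
              Finset.sum_congr rfl fun i _ => by simp [Pi.sub_apply]
          _ ≤ Bg * N (x - y) := h
      have hlow := hBlow y x
      have hNsym : N (y - x) = N (x - y) := by
        calc N (y - x) = N ((-1 : ℝ) • (x - y)) := by
              rw [neg_one_smul, neg_sub]
          _ = |(-1 : ℝ)| * N (x - y) := hNsmul _ _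
          _ = N (x - y) := by simp
      rw [hNsym] at hlow
      rw [hyy, heq] at hsym
      nlinarith [sq_nonneg (N (x - y) - η * Bg),
        mul_le_mul_of_nonneg_left hcs hη0, hNnn (x - y)]
    have h4 : bregman Ψ gradΨ θ' p ≤ bregman Ψ gradΨ θ' y := by
      have hopt := breg_first_order hΘconv Ψ gradΨ hΨdiff (hproj t ht).1 hθ' (hproj t ht).2
      have hid := bregman_three Ψ gradΨ θ' p y
      have hflip : ∑ i, (gradΨ p i - gradΨ y i) * (p i - θ' i)
          = - ∑ i, (gradΨ p i - gradΨ y i) * (θ' i - p i) := by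
        rw [← Finset.sum_neg_distrib]
        exact Finset.sum_congr rfl fun i _ => by ring
      rw [hflip] at hid
      have hB := hBpos p y
      linarith
    have h5 := mul_le_mul_of_nonneg_left h1 hη0
    linarith
  have htel := Finset.sum_range_sub' (fun k => bregman Ψ gradΨ θ' (θs k)) T
  have hsle : ∑ t ∈ Finset.range T, η * (f t (θs t) - f t θ')
      ≤ ∑ t ∈ Finset.range T,
        (bregman Ψ gradΨ θ' (θs t) - bregman Ψ gradΨ θ' (θs (t+1)) + η^2 * Bg^2 / 2) :=
    Finset.sum_le_sum fun t ht => hstep t (Finset.mem_range.1 ht)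
  rw [Finset.sum_add_distrib, Finset.sum_const, Finset.card_range, htel,
    nsmul_eq_mul] at hsle
  have hB0 : bregman Ψ gradΨ θ' (θs 0) ≤ BΨ := by
    have hopt : 0 ≤ ∑ i, gradΨ (θs 0) i * (θ' i - θs 0 i) := by
      have h := first_order hΘconv Ψ _ hinit.1 hθ' hinit.2 (hΨdiff (θs 0))
      rw [sum_proj_apply] at h
      calc (0:ℝ) ≤ ∑ i, gradΨ (θs 0) i * (θ' - θs 0) i := h
        _ = ∑ i, gradΨ (θs 0) i * (θ' i - θs 0 i) :=
          Finset.sum_congr rfl fun i _ => by simp [Pi.sub_apply]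
    unfold bregman
    linarith
  have hBT := hBpos θ' (θs T)
  rw [Finset.mul_sum]
  linarith

end MirrorAux

theorem mirror_descent
    {n : ℕ} (Θ : Set (Fin n → ℝ)) (hΘcomp : IsCompact Θ) (hΘconv : Convex ℝ Θ)
    (f : ℕ → (Fin n → ℝ) → ℝ) (hf : ∀ t, ConvexOn ℝ Θ (f t))
    -- `N` is a norm on `ℝ^n`
    (N : (Fin n → ℝ) → ℝ)
    (hNtri : ∀ x y, N (x + y) ≤ N x + N y)
    (hNsmul : ∀ (c : ℝ) x, N (c • x) = |c| * N x)
    (hNdef : ∀ x, N x = 0 → x = 0)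
    -- `Ψ` is nonnegative and differentiable, with gradient `gradΨ`
    (Ψ : (Fin n → ℝ) → ℝ) (gradΨ : (Fin n → ℝ) → (Fin n → ℝ))
    (hΨnonneg : ∀ x, 0 ≤ Ψ x)
    (hΨdiff : ∀ x, HasFDerivAt Ψ
      (∑ i, gradΨ x i • (ContinuousLinearMap.proj i : (Fin n → ℝ) →L[ℝ] ℝ)) x)
    -- `Ψ` is `1`-strongly convex w.r.t. `N`
    (hstrong : ∀ x y, Ψ x + (∑ i, gradΨ x i * (y i - x i)) + (1 / 2) * (N (y - x)) ^ 2 ≤ Ψ y)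
    (BΨ Bg : ℝ) (hBΨ : ∀ x ∈ Θ, Ψ x ≤ BΨ)
    (T : ℕ) (hT : 0 < T)
    (η : ℝ) (hη : η = Real.sqrt (BΨ / (T * Bg ^ 2)))
    (θs θtil : ℕ → Fin n → ℝ) (gs : ℕ → Fin n → ℝ)
    -- `θ^(1)` minimizes `Ψ` over `Θ`
    (hinit : θs 0 ∈ Θ ∧ ∀ y ∈ Θ, Ψ (θs 0) ≤ Ψ y)
    -- `ǧ_t` is a subgradient of `f_t` at `θ^(t)`
    (hsubgrad : ∀ t < T, ∀ y ∈ Θ, f t (θs t) + ∑ i, gs t i * (y i - θs t i) ≤ f t y)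
    -- dual-norm bound on the subgradients
    (hgb : ∀ t < T, dualNorm N (gs t) ≤ Bg)
    -- the mirror step: `∇Ψ(θ̃^(t+1)) = ∇Ψ(θ^(t)) − η ǧ_t`
    (hmirror : ∀ t < T, gradΨ (θtil (t + 1)) = gradΨ (θs t) - η • gs t)
    -- the Bregman projection step
    (hproj : ∀ t < T, θs (t + 1) ∈ Θ ∧
      ∀ y ∈ Θ, bregman Ψ gradΨ (θs (t + 1)) (θtil (t + 1))
        ≤ bregman Ψ gradΨ y (θtil (t + 1))) :
    ∀ θ' ∈ Θ,
      (1 / (T : ℝ)) * ∑ t ∈ Finset.range T, f t (θs t)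
        - (1 / (T : ℝ)) * ∑ t ∈ Finset.range T, f t θ'
      ≤ 2 * Bg * Real.sqrt (BΨ / T) := by
  intro θ' hθ'
  obtain ⟨hN0, hNnn⟩ := Naux_nonneg N hNtri hNsmul
  obtain ⟨c, hc, hlb⟩ := Naux_lb N hNtri hNsmul hNdef (Naux_cont N hNtri hNsmul)
  have hdual := fun g => dual_facts N hN0 hNnn hNsmul hNdef c hc hlb g
  have hBg0 : 0 ≤ Bg := le_trans (hdual (gs 0)).1 (hgb 0 hT)
  have hBΨ0 : 0 ≤ BΨ := le_trans (hΨnonneg θ') (hBΨ θ' hθ')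
  have hTpos : (0:ℝ) < T := by exact_mod_cast hT
  have hmem : ∀ t, t ≤ T → θs t ∈ Θ := by
    intro t
    induction t with
    | zero => intro _; exact hinit.1
    | succ k _ => intro h; exact (hproj k (by omega)).1
  have hη0 : 0 ≤ η := hη ▸ Real.sqrt_nonneg _
  have hBlow : ∀ a b, (1/2) * (N (a - b))^2 ≤ bregman Ψ gradΨ a b := by
    intro a b
    have := hstrong b a
    unfold bregman
    linarith
  have hBpos : ∀ a b, 0 ≤ bregman Ψ gradΨ a b := fun a b =>
    le_trans (by positivity) (hBlow a b)
  have hCSB : ∀ t, t < T → ∀ v, (∑ i, gs t i * v i) ≤ Bg * N v := by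
    intro t ht v
    calc ∑ i, gs t i * v i ≤ dualNorm N (gs t) * N v := (hdual _).2 v
      _ ≤ Bg * N v := mul_le_mul_of_nonneg_right (hgb t ht) (hNnn v)
  have hRHS0 : 0 ≤ 2 * Bg * Real.sqrt (BΨ / T) :=
    mul_nonneg (by linarith) (Real.sqrt_nonneg _)
  -- case `Bg = 0`
  rcases eq_or_lt_of_le hBg0 with hBgz | hBgpos
  · have hle : ∀ t, t < T → f t (θs t) ≤ f t θ' := by
      intro t ht
      have h1 := hsubgrad t ht θ' hθ'
      have h2 := hCSB t ht (θs t - θ')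
      rw [← hBgz, zero_mul] at h2
      have h3 : ∑ i, gs t i * (θs t - θ') i = - ∑ i, gs t i * (θ' i - θs t i) := by
        rw [← Finset.sum_neg_distrib]
        exact Finset.sum_congr rfl fun i _ => by simp [Pi.sub_apply]; ring
      rw [h3] at h2
      linarith
    have hsle : ∑ t ∈ Finset.range T, f t (θs t) ≤ ∑ t ∈ Finset.range T, f t θ' :=
      Finset.sum_le_sum fun t ht => hle t (Finset.mem_range.1 ht)
    have h1T : 0 ≤ (1:ℝ)/T := by positivity
    nlinarith [mul_le_mul_of_nonneg_left hsle h1T]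
  -- case `BΨ = 0`
  rcases eq_or_lt_of_le hBΨ0 with hBΨz | hBΨpos
  · have hsingle : ∀ x ∈ Θ, x = θs 0 := by
      intro x hx
      have hΨx : Ψ x = 0 := le_antisymm (hBΨz ▸ hBΨ x hx) (hΨnonneg x)
      have hΨ0 : Ψ (θs 0) = 0 := le_antisymm (hBΨz ▸ hBΨ _ hinit.1) (hΨnonneg _)
      have hopt : 0 ≤ ∑ i, gradΨ (θs 0) i * (x i - θs 0 i) := by
        have h := first_order hΘconv Ψ _ hinit.1 hx hinit.2 (hΨdiff (θs 0))
        rw [sum_proj_apply] at h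
        calc (0:ℝ) ≤ ∑ i, gradΨ (θs 0) i * (x - θs 0) i := h
          _ = ∑ i, gradΨ (θs 0) i * (x i - θs 0 i) :=
            Finset.sum_congr rfl fun i _ => by simp [Pi.sub_apply]
      have hstr := hstrong (θs 0) x
      rw [hΨx, hΨ0] at hstr
      have hNz : N (x - θs 0) = 0 := by nlinarith [hNnn (x - θs 0), sq_nonneg (N (x - θs 0))]
      have := hNdef _ hNz
      have : x - θs 0 = 0 := this
      funext i
      have := congrFun this i
      simp [Pi.sub_apply] at this
      linarith [this]
    have hθ'eq : θ' = θs 0 := hsingle θ' hθ'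
    have hfs : ∀ t ∈ Finset.range T, f t (θs t) = f t θ' := by
      intro t ht
      rw [hθ'eq, hsingle (θs t) (hmem t (le_of_lt (Finset.mem_range.1 ht)))]
    rw [Finset.sum_congr rfl hfs]
    simpa using hRHS0
  -- main case
  have hdenom : (0:ℝ) < T * Bg^2 := by positivity
  have hηpos : 0 < η := by
    rw [hη]
    exact Real.sqrt_pos.2 (div_pos hBΨpos hdenom)
  have hη2 : η^2 = BΨ / (T * Bg^2) := by
    rw [hη, Real.sq_sqrt (le_of_lt (div_pos hBΨpos hdenom))]
  have hBΨeq : BΨ = η^2 * (T * Bg^2) := by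
    rw [hη2]; field_simp
  have hsum : η * ∑ t ∈ Finset.range T, (f t (θs t) - f t θ')
      ≤ BΨ + T * (η^2 * Bg^2 / 2) :=
    mirror_core hΘconv N hNsmul hNnn Ψ gradΨ hΨdiff hBlow f T η Bg BΨ hη0
      θs θtil gs θ' hθ' hinit hsubgrad hmirror hproj hCSB (hBΨ θ' hθ') (hΨnonneg (θs 0))
  set S := ∑ t ∈ Finset.range T, (f t (θs t) - f t θ') with hSdef
  -- final arithmetic
  have hsqrt : Real.sqrt (BΨ / T) = η * Bg := by
    have harg : BΨ / (T : ℝ) = BΨ / (T * Bg^2) * Bg^2 := by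
      field_simp
    rw [harg, ← hη2, Real.sqrt_mul (sq_nonneg η), Real.sqrt_sq hη0, Real.sqrt_sq hBg0]
  rw [hsqrt]
  have hS2 : S ≤ (3/2) * η * (T : ℝ) * Bg^2 := by
    have h5 : η * S ≤ η * ((3/2) * η * (T : ℝ) * Bg^2) := by
      rw [hBΨeq] at hsum
      nlinarith [hsum]
    exact le_of_mul_le_mul_left h5 hηpos
  have hsplit : (1 / (T : ℝ)) * ∑ t ∈ Finset.range T, f t (θs t)
      - (1 / (T : ℝ)) * ∑ t ∈ Finset.range T, f t θ' = (1 / (T : ℝ)) * S := by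
    rw [hSdef, Finset.sum_sub_distrib, mul_sub]
  rw [hsplit]
  calc (1 / (T : ℝ)) * S ≤ (1 / (T : ℝ)) * ((3/2) * η * (T : ℝ) * Bg^2) :=
        mul_le_mul_of_nonneg_left hS2 (by positivity)
    _ = (3/2) * η * Bg^2 := by
        rw [show (3/2:ℝ) * η * (T:ℝ) * Bg^2 = (T:ℝ) * ((3/2) * η * Bg^2) by ring,
          ← mul_assoc, one_div, inv_mul_cancel₀ (ne_of_gt hTpos), one_mul]
    _ ≤ 2 * Bg * (η * Bg) := by nlinarith [mul_nonneg hη0 (sq_nonneg Bg)]
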